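/- arXiv:2311.08895 — 4 statements merged into one kernel-verified Lean document; each statement's English description precedes it below -/
import Mathlib

section
/- For every real number a > 0 and every point x ∈ Ω_n, the map φ_a is differentiable at x and the determinant of its Jacobian matrix satisfies det Dφ_a(x) = a·x_n^{aγ − n}; in particular det Dφ_a(x) > 0 everywhere on Ω_n. -/
open MeasureTheory Real Finset
open scoped ENNReal BigOperators

noncomputable section

/-- The model Lipschitz domain `Ω_n` (dimension `n+1`): `0 < x_last < 1` and
`0 < x_i < x_last` for the first `n` coordinates. -/
def OmegaModel (n : ℕ) : Set (EuclideanSpace ℝ (Fin (n + 1))) :=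
  {x | 0 < x (Fin.last n) ∧ x (Fin.last n) < 1 ∧
    ∀ i : Fin n, 0 < x i.castSucc ∧ x i.castSucc < x (Fin.last n)}

/-- The outward cuspidal domain `Ω_γ` (dimension `n+1`) with Hölder exponents `γi`. -/
def OmegaGamma (n : ℕ) (γi : Fin n → ℝ) : Set (EuclideanSpace ℝ (Fin (n + 1))) :=
  {x | 0 < x (Fin.last n) ∧ x (Fin.last n) < 1 ∧
    ∀ i : Fin n, 0 < x i.castSucc ∧ x i.castSucc < x (Fin.last n) ^ γi i}

/-- The cusp map `φ_a(x) = (x_1 x_last^{aγ_1-1}, …, x_n x_last^{aγ_n-1}, x_last^a)`. -/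
def phiMap (n : ℕ) (γi : Fin n → ℝ) (a : ℝ)
    (x : EuclideanSpace ℝ (Fin (n + 1))) : EuclideanSpace ℝ (Fin (n + 1)) :=
  WithLp.toLp 2 (fun j => Fin.lastCases (x (Fin.last n) ^ a)
    (fun i => x i.castSucc * x (Fin.last n) ^ (a * γi i - 1)) j)

/-- For every `a > 0` and every `x ∈ Ω_n`, the map `φ_a` is differentiable
at `x` and the determinant of its Jacobian matrix equals `a · x_last^{aγ - (n+1)}`,
where `γ = 1 + γ_1 + ⋯ + γ_n`; in particular the Jacobian determinant is positive.
(Paper dimension `n` corresponds to Lean dimension `n + 1`.) -/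
theorem statement1 (n : ℕ) (hn : 1 ≤ n) (γi : Fin n → ℝ) (hγi : ∀ i, 1 ≤ γi i)
    (γ : ℝ) (hγ : γ = 1 + ∑ i, γi i)
    (a : ℝ) (ha : 0 < a)
    (x : EuclideanSpace ℝ (Fin (n + 1))) (hx : x ∈ OmegaModel n) :
    DifferentiableAt ℝ (phiMap n γi a) x ∧
    (fderiv ℝ (phiMap n γi a) x).det = a * x (Fin.last n) ^ (a * γ - (n + 1 : ℝ)) ∧
    0 < (fderiv ℝ (phiMap n γi a) x).det := by
  obtain ⟨ht0, ht1, hxi⟩ := hx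
  have htne : x (Fin.last n) ≠ 0 := ne_of_gt ht0
  set t : ℝ := x (Fin.last n) with htdef
  set E := PiLp.continuousLinearEquiv 2 ℝ (fun _ : Fin (n + 1) => ℝ) with hE
  set g : (Fin (n + 1) → ℝ) → (Fin (n + 1) → ℝ) :=
    fun y j => Fin.lastCases (y (Fin.last n) ^ a)
      (fun i => y i.castSucc * y (Fin.last n) ^ (a * γi i - 1)) j with hg
  set rows : ∀ _ : Fin (n + 1), ((Fin (n + 1) → ℝ) →L[ℝ] ℝ) :=
    fun j => Fin.lastCases
      ((a * t ^ (a - 1)) • ContinuousLinearMap.proj (Fin.last n))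
      (fun i => x i.castSucc • (((a * γi i - 1) * t ^ (a * γi i - 1 - 1)) •
          ContinuousLinearMap.proj (Fin.last n)) +
        (t ^ (a * γi i - 1)) • ContinuousLinearMap.proj i.castSucc) j with hrows
  set L : (Fin (n + 1) → ℝ) →L[ℝ] (Fin (n + 1) → ℝ) := ContinuousLinearMap.pi rows with hL
  have hgL : HasFDerivAt g L (x : Fin (n + 1) → ℝ) := by
    apply hasFDerivAt_pi.2
    intro j
    induction j using Fin.lastCases with
    | last =>
        simp only [hrows, Fin.lastCases_last]
        exact (Real.hasDerivAt_rpow_const (p := a) (Or.inl htne)).comp_hasFDerivAt (f := fun y : Fin (n+1) → ℝ => y (Fin.last n))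
          x.ofLp (hasFDerivAt_apply (Fin.last n) x.ofLp)
    | cast i =>
        simp only [hrows, Fin.lastCases_castSucc]
        exact (hasFDerivAt_apply i.castSucc x.ofLp).mul
          ((Real.hasDerivAt_rpow_const (p := a * γi i - 1) (Or.inl htne)).comp_hasFDerivAt (f := fun y : Fin (n+1) → ℝ => y (Fin.last n))
            x.ofLp (hasFDerivAt_apply (Fin.last n) x.ofLp))
  have hphi : HasFDerivAt (phiMap n γi a)
      ((E.symm : (Fin (n+1) → ℝ) →L[ℝ] EuclideanSpace ℝ (Fin (n+1))) ∘L
        (L ∘L (E : EuclideanSpace ℝ (Fin (n+1)) →L[ℝ] (Fin (n+1) → ℝ)))) x :=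
    E.symm.hasFDerivAt.comp x (hgL.comp x E.hasFDerivAt)
  have hfd : fderiv ℝ (phiMap n γi a) x =
      ((E.symm : (Fin (n+1) → ℝ) →L[ℝ] EuclideanSpace ℝ (Fin (n+1))) ∘L
        (L ∘L (E : EuclideanSpace ℝ (Fin (n+1)) →L[ℝ] (Fin (n+1) → ℝ)))) := hphi.fderiv
  have hdet : (fderiv ℝ (phiMap n γi a) x).det = a * t ^ (a * γ - (n + 1 : ℝ)) := by
    rw [hfd]
    have hconj : (((E.symm : (Fin (n+1) → ℝ) →L[ℝ] EuclideanSpace ℝ (Fin (n+1))) ∘L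
        (L ∘L (E : EuclideanSpace ℝ (Fin (n+1)) →L[ℝ] (Fin (n+1) → ℝ)))) :
          EuclideanSpace ℝ (Fin (n+1)) →ₗ[ℝ] EuclideanSpace ℝ (Fin (n+1))) =
        (E.symm.toLinearEquiv : (Fin (n+1) → ℝ) →ₗ[ℝ] EuclideanSpace ℝ (Fin (n+1))) ∘ₗ
          (L : (Fin (n+1) → ℝ) →ₗ[ℝ] (Fin (n+1) → ℝ)) ∘ₗ
          (E.symm.toLinearEquiv.symm : EuclideanSpace ℝ (Fin (n+1)) →ₗ[ℝ] (Fin (n+1) → ℝ)) := rfl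
    rw [ContinuousLinearMap.det, hconj, LinearMap.det_conj]
    rw [← LinearMap.det_toMatrix' (L : (Fin (n+1) → ℝ) →ₗ[ℝ] (Fin (n+1) → ℝ))]
    set M := LinearMap.toMatrix' (L : (Fin (n+1) → ℝ) →ₗ[ℝ] (Fin (n+1) → ℝ)) with hM
    have hMapp : ∀ i j, M i j =
        rows i (fun j' => if j' = j then 1 else 0) := by
      intro i j
      simp [hM, hL, LinearMap.toMatrix'_apply]
      congr 1; ext j'; simp [Pi.single_apply]
    have htri : M.BlockTriangular id := by
      intro i j hij
      rw [hMapp]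
      induction i using Fin.lastCases with
      | last =>
          have : Fin.last n ≠ j := fun h => absurd h.symm (ne_of_lt hij)
          simp [hrows, this]
      | cast k =>
          have h1 : (Fin.last n : Fin (n+1)) ≠ j := by
            intro h
            exact absurd (h ▸ hij) (not_lt.2 (Fin.le_last _))
          have h2 : (k.castSucc : Fin (n+1)) ≠ j := fun h => absurd h.symm (ne_of_lt hij)
          simp [hrows, h1, h2]
    rw [Matrix.det_of_upperTriangular htri]
    have hdiag_last : M (Fin.last n) (Fin.last n) = a * t ^ (a - 1) := by
      rw [hMapp]; simp [hrows]
    have hdiag : ∀ i : Fin n, M i.castSucc i.castSucc = t ^ (a * γi i - 1) := by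
      intro i
      rw [hMapp]
      have h1 : (Fin.last n : Fin (n+1)) ≠ i.castSucc := (Fin.castSucc_lt_last i).ne'
      simp [hrows, h1]
    rw [Fin.prod_univ_castSucc]
    simp only [hdiag, hdiag_last]
    rw [← Real.rpow_sum_of_pos ht0]
    rw [mul_comm (a : ℝ) (t ^ (a-1)), ← mul_assoc, ← Real.rpow_add ht0, mul_comm]
    congr 1
    have hsum : ∑ i : Fin n, (a * γi i - 1) = a * ∑ i, γi i - n := by
      rw [Finset.sum_sub_distrib, ← Finset.mul_sum]
      simp
    rw [hsum, hγ]
    push_cast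
    ring
  refine ⟨hphi.differentiableAt, hdet, ?_⟩
  rw [hdet]
  exact mul_pos ha (Real.rpow_pos_of_pos ht0 _)
end
end

section
/- For every real number a > 0, the integral ∫_{Ω_n} ‖Dφ_a(x)‖^n dx is finite, and moreover ∫_{Ω_n} ‖Dφ_a(x)‖^n dx ≤ ( Σ_{i=1}^{n-1} (aγ_i − 1)^2 + n − 1 + a^2 )^{n/2} / (n·a). -/
open MeasureTheory Real Finset
open scoped ENNReal BigOperators

noncomputable section

lemma measurableSet_OmegaModel (n : ℕ) : MeasurableSet (OmegaModel n) := by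
  have hm : ∀ j : Fin (n+1), Measurable fun x : EuclideanSpace ℝ (Fin (n+1)) => x j :=
    fun j => (measurable_pi_apply j).comp (WithLp.measurable_ofLp _ _)
  have : OmegaModel n = {x | 0 < x (Fin.last n)} ∩ ({x | x (Fin.last n) < 1} ∩
      ⋂ i : Fin n, ({x | 0 < x i.castSucc} ∩ {x | x i.castSucc < x (Fin.last n)})) := by
    ext x; simp [OmegaModel, Set.mem_iInter, forall_and]
  rw [this]
  exact (measurableSet_lt measurable_const (hm _)).inter
    ((measurableSet_lt (hm _) measurable_const).inter
      (MeasurableSet.iInter fun i => (measurableSet_lt measurable_const (hm _)).inter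
        (measurableSet_lt (hm _) (hm _))))

lemma measurableSet_T (n : ℕ) : MeasurableSet {p : ℝ × (Fin n → ℝ) |
    0 < p.1 ∧ p.1 < 1 ∧ ∀ j, 0 < p.2 j ∧ p.2 j < p.1} := by
  have : {p : ℝ × (Fin n → ℝ) | 0 < p.1 ∧ p.1 < 1 ∧ ∀ j, 0 < p.2 j ∧ p.2 j < p.1}
      = {p : ℝ × (Fin n → ℝ) | 0 < p.1} ∩ ({p | p.1 < 1} ∩
        ⋂ j : Fin n, ({p : ℝ × (Fin n → ℝ) | 0 < p.2 j} ∩ {p | p.2 j < p.1})) := by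
    ext p; simp [Set.mem_iInter, forall_and]
  rw [this]
  have hsnd : ∀ j : Fin n, Measurable fun p : ℝ × (Fin n → ℝ) => p.2 j :=
    fun j => measurable_snd.eval
  exact (measurableSet_lt measurable_const measurable_fst).inter
    ((measurableSet_lt measurable_fst measurable_const).inter
      (MeasurableSet.iInter fun j =>
        (measurableSet_lt measurable_const (hsnd j)).inter
        (measurableSet_lt (hsnd j) measurable_fst)))

lemma omega_lintegral (n : ℕ) (c : ℝ) (hc : (0:ℝ) < c + n + 1) :
    ∫⁻ x in OmegaModel n, ENNReal.ofReal ((x (Fin.last n)) ^ c) =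
      ENNReal.ofReal (1 / (c + n + 1)) := by
  classical
  have step1 : ∫⁻ x in OmegaModel n, ENNReal.ofReal ((x (Fin.last n)) ^ c) =
      ∫⁻ y in {y : Fin (n+1) → ℝ | 0 < y (Fin.last n) ∧ y (Fin.last n) < 1 ∧
        ∀ i : Fin n, 0 < y i.castSucc ∧ y i.castSucc < y (Fin.last n)},
        ENNReal.ofReal ((y (Fin.last n)) ^ c) := by
    rw [← MeasurePreserving.setLIntegral_comp_preimage_emb
      ((EuclideanSpace.volume_preserving_symm_measurableEquiv_toLp (Fin (n+1))).symm)
      (MeasurableEquiv.measurableEmbedding _)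
      (fun x : EuclideanSpace ℝ (Fin (n+1)) => ENNReal.ofReal ((x (Fin.last n)) ^ c))
      (OmegaModel n)]
    rfl
  rw [step1]
  have step2 : ∫⁻ y in {y : Fin (n+1) → ℝ | 0 < y (Fin.last n) ∧ y (Fin.last n) < 1 ∧
        ∀ i : Fin n, 0 < y i.castSucc ∧ y i.castSucc < y (Fin.last n)},
        ENNReal.ofReal ((y (Fin.last n)) ^ c) =
      ∫⁻ p in {p : ℝ × (Fin n → ℝ) | 0 < p.1 ∧ p.1 < 1 ∧ ∀ j, 0 < p.2 j ∧ p.2 j < p.1},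
        ENNReal.ofReal (p.1 ^ c) := by
    rw [← MeasurePreserving.setLIntegral_comp_preimage_emb
      ((volume_preserving_piFinSuccAbove (fun _ : Fin (n+1) => ℝ) (Fin.last n)).symm)
      (MeasurableEquiv.measurableEmbedding _)
      (fun y : Fin (n+1) → ℝ => ENNReal.ofReal ((y (Fin.last n)) ^ c)) _]
    have hset : (⇑(MeasurableEquiv.piFinSuccAbove (fun _ : Fin (n+1) => ℝ) (Fin.last n)).symm)
        ⁻¹' {y : Fin (n+1) → ℝ | 0 < y (Fin.last n) ∧ y (Fin.last n) < 1 ∧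
          ∀ i : Fin n, 0 < y i.castSucc ∧ y i.castSucc < y (Fin.last n)} =
        {p : ℝ × (Fin n → ℝ) | 0 < p.1 ∧ p.1 < 1 ∧ ∀ j, 0 < p.2 j ∧ p.2 j < p.1} := by
      ext p
      simp only [Set.mem_preimage, Set.mem_setOf_eq, MeasurableEquiv.piFinSuccAbove_symm_apply,
        Fin.insertNthEquiv, Equiv.coe_fn_mk, Fin.insertNth_apply_same]
      refine and_congr_right fun _ => and_congr_right fun _ => forall_congr' fun j => ?_
      rw [← Fin.succAbove_last, Fin.insertNth_apply_succAbove]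
    rw [hset]
    refine lintegral_congr fun p => ?_
    simp [MeasurableEquiv.piFinSuccAbove_symm_apply, Fin.insertNthEquiv,
      Fin.insertNth_apply_same]
  rw [step2]
  have hT := measurableSet_T n
  rw [← lintegral_indicator hT, Measure.volume_eq_prod, lintegral_prod _
    (((measurable_fst.pow_const c).ennreal_ofReal.indicator hT).aemeasurable)]
  have inner : ∀ t : ℝ, (∫⁻ y : Fin n → ℝ,
      ({p : ℝ × (Fin n → ℝ) | 0 < p.1 ∧ p.1 < 1 ∧ ∀ j, 0 < p.2 j ∧ p.2 j < p.1}.indicator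
        (fun p => ENNReal.ofReal (p.1 ^ c)) (t, y))) =
      (Set.Ioo (0:ℝ) 1).indicator (fun t => ENNReal.ofReal (t ^ (c + n))) t := by
    intro t
    by_cases ht : t ∈ Set.Ioo (0:ℝ) 1
    · obtain ⟨ht0, ht1⟩ := ht
      have hfun : ∀ y : Fin n → ℝ,
          ({p : ℝ × (Fin n → ℝ) | 0 < p.1 ∧ p.1 < 1 ∧ ∀ j, 0 < p.2 j ∧ p.2 j < p.1}.indicator
            (fun p => ENNReal.ofReal (p.1 ^ c)) (t, y)) =
          (Set.univ.pi fun _ : Fin n => Set.Ioo (0:ℝ) t).indicator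
            (fun _ => ENNReal.ofReal (t ^ c)) y := by
        intro y
        by_cases hy : ∀ j, 0 < y j ∧ y j < t
        · rw [Set.indicator_of_mem (by exact ⟨ht0, ht1, hy⟩),
            Set.indicator_of_mem (by simpa [Set.mem_pi] using hy)]
        · rw [Set.indicator_of_notMem (fun h => hy h.2.2),
            Set.indicator_of_notMem (by simpa [Set.mem_pi] using hy)]
      simp_rw [hfun]
      rw [lintegral_indicator (MeasurableSet.univ_pi fun _ => measurableSet_Ioo),
        setLIntegral_const, volume_pi_pi, Set.indicator_of_mem (Set.mem_Ioo.2 ⟨ht0, ht1⟩)]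
      simp only [Real.volume_Ioo, sub_zero, Finset.prod_const, Finset.card_univ,
        Fintype.card_fin]
      rw [← ENNReal.ofReal_pow ht0.le, ← ENNReal.ofReal_mul (by positivity)]
      congr 1
      rw [← Real.rpow_natCast t n, ← Real.rpow_add ht0]
    · have hfun : ∀ y : Fin n → ℝ,
          ({p : ℝ × (Fin n → ℝ) | 0 < p.1 ∧ p.1 < 1 ∧ ∀ j, 0 < p.2 j ∧ p.2 j < p.1}.indicator
            (fun p => ENNReal.ofReal (p.1 ^ c)) (t, y)) = 0 := by
        intro y
        apply Set.indicator_of_notMem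
        intro hmem
        exact ht ⟨hmem.1, hmem.2.1⟩
      simp_rw [hfun]
      rw [Set.indicator_of_notMem ht, lintegral_zero]
  simp_rw [inner]
  rw [lintegral_indicator measurableSet_Ioo]
  have hexp : (-1 : ℝ) < c + n := by linarith
  have hint : IntegrableOn (fun t : ℝ => t ^ (c + n)) (Set.Ioo 0 1) := by
    have h := (intervalIntegral.intervalIntegrable_rpow' (a := 0) (b := 1) hexp)
    rw [intervalIntegrable_iff_integrableOn_Ioc_of_le zero_le_one] at h
    exact h.mono_set Set.Ioo_subset_Ioc_self
  rw [← ofReal_integral_eq_lintegral_ofReal hint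
    ((ae_restrict_iff' measurableSet_Ioo).2 (Filter.Eventually.of_forall
      fun t ht => Real.rpow_nonneg ht.1.le _))]
  congr 1
  rw [← integral_Ioc_eq_integral_Ioo, ← intervalIntegral.integral_of_le zero_le_one,
    integral_rpow (Or.inl hexp)]
  rw [Real.one_rpow, Real.zero_rpow (by linarith)]
  ring

lemma hasFDeriv_aux (n : ℕ) (γi : Fin n → ℝ) (a : ℝ)
    {y : Fin (n+1) → ℝ} (hy : y (Fin.last n) ≠ 0) :
    HasFDerivAt (fun z : Fin (n+1) → ℝ => (fun j => Fin.lastCases ((z (Fin.last n)) ^ a)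
      (fun i => z i.castSucc * (z (Fin.last n)) ^ (a * γi i - 1)) j : Fin (n+1) → ℝ))
      (ContinuousLinearMap.pi (fun j => Fin.lastCases
        ((a * (y (Fin.last n)) ^ (a-1)) • (ContinuousLinearMap.proj (R := ℝ) (φ := fun _ : Fin (n+1) => ℝ) (Fin.last n)))
        (fun i => y i.castSucc • (((a * γi i - 1) * (y (Fin.last n)) ^ (a * γi i - 1 - 1)) •
            (ContinuousLinearMap.proj (R := ℝ) (φ := fun _ : Fin (n+1) => ℝ) (Fin.last n))) +
          ((y (Fin.last n)) ^ (a * γi i - 1)) • (ContinuousLinearMap.proj (R := ℝ) (φ := fun _ : Fin (n+1) => ℝ) i.castSucc)) j)) y := by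
  apply hasFDerivAt_pi'.2
  intro j
  rw [ContinuousLinearMap.proj_pi]
  induction j using Fin.lastCases with
  | last =>
      simp only [Fin.lastCases_last]
      exact (Real.hasDerivAt_rpow_const (p := a) (Or.inl hy)).comp_hasFDerivAt y
        (hasFDerivAt_apply (𝕜 := ℝ) (Fin.last n) y)
  | cast i =>
      simp only [Fin.lastCases_castSucc]
      have h2 := (Real.hasDerivAt_rpow_const (p := a * γi i - 1) (Or.inl hy)).comp_hasFDerivAt y
          (hasFDerivAt_apply (𝕜 := ℝ) (Fin.last n) y)
      exact (hasFDerivAt_apply i.castSucc y).mul h2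

lemma opNorm_le_of_rows {m : ℕ} (L : EuclideanSpace ℝ (Fin m) →L[ℝ] EuclideanSpace ℝ (Fin m))
    (C : ℝ) (hC : 0 ≤ C)
    (h : ∀ v : EuclideanSpace ℝ (Fin m), ∑ j, (L v j) ^ 2 ≤ C ^ 2 * ∑ j, (v j) ^ 2) :
    ‖L‖ ≤ C := by
  apply L.opNorm_le_bound hC
  intro v
  rw [EuclideanSpace.norm_eq, EuclideanSpace.norm_eq]
  simp only [Real.norm_eq_abs, sq_abs]
  calc Real.sqrt (∑ j, (L v j) ^ 2) ≤ Real.sqrt (C ^ 2 * ∑ j, (v j) ^ 2) :=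
        Real.sqrt_le_sqrt (h v)
    _ = C * Real.sqrt (∑ j, (v j) ^ 2) := by
        rw [Real.sqrt_mul (by positivity), Real.sqrt_sq hC]

lemma norm_fderiv_phiMap_le (n : ℕ) (γi : Fin n → ℝ) (a : ℝ) (hγi : ∀ i, 1 ≤ γi i) (ha : 0 < a)
    {x : EuclideanSpace ℝ (Fin (n+1))} (hx : x ∈ OmegaModel n) :
    ‖fderiv ℝ (phiMap n γi a) x‖ ≤
      Real.sqrt ((∑ i, (a * γi i - 1) ^ 2) + n + a ^ 2) * (x (Fin.last n)) ^ (a - 1) := by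
  obtain ⟨ht0, ht1, hco⟩ := hx
  have hne : x (Fin.last n) ≠ 0 := ne_of_gt ht0
  set eqE := PiLp.continuousLinearEquiv 2 ℝ (fun _ : Fin (n+1) => ℝ) with heqE
  have hF0 := hasFDeriv_aux n γi a (y := eqE x) hne
  have hF : HasFDerivAt (phiMap n γi a)
      (((eqE.symm : (Fin (n+1) → ℝ) →L[ℝ] EuclideanSpace ℝ (Fin (n+1))).comp
        (ContinuousLinearMap.pi (fun j => Fin.lastCases
        ((a * (x (Fin.last n)) ^ (a-1)) •
          (ContinuousLinearMap.proj (R := ℝ) (φ := fun _ : Fin (n+1) => ℝ) (Fin.last n)))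
        (fun i => x i.castSucc • (((a * γi i - 1) * (x (Fin.last n)) ^ (a * γi i - 1 - 1)) •
            (ContinuousLinearMap.proj (R := ℝ) (φ := fun _ : Fin (n+1) => ℝ) (Fin.last n))) +
          ((x (Fin.last n)) ^ (a * γi i - 1)) •
            (ContinuousLinearMap.proj (R := ℝ) (φ := fun _ : Fin (n+1) => ℝ) i.castSucc)) j))).comp
        (eqE : EuclideanSpace ℝ (Fin (n+1)) →L[ℝ] (Fin (n+1) → ℝ))) x :=
    eqE.symm.hasFDerivAt.comp x (hF0.comp x eqE.hasFDerivAt)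
  rw [hF.fderiv]
  set t : ℝ := x (Fin.last n) with htdef
  set T : ℝ := t ^ (a - 1) with hTdef
  have hT0 : 0 < T := Real.rpow_pos_of_pos ht0 _
  have hK : (0:ℝ) ≤ (∑ i, (a * γi i - 1) ^ 2) + n + a ^ 2 := by positivity
  apply opNorm_le_of_rows _ _ (mul_nonneg (Real.sqrt_nonneg _) hT0.le)
  intro v
  rw [mul_pow, Real.sq_sqrt hK]
  set w : ℝ := v (Fin.last n) with hwdef
  set S : ℝ := ∑ j, (v j) ^ 2 with hSdef
  have hS : ∀ i : Fin n, (v i.castSucc) ^ 2 + w ^ 2 ≤ S := by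
    intro i
    have h1 : (v i.castSucc) ^ 2 ≤ ∑ i' : Fin n, (v i'.castSucc) ^ 2 :=
      Finset.single_le_sum (f := fun i' : Fin n => (v i'.castSucc) ^ 2)
        (fun _ _ => sq_nonneg _) (Finset.mem_univ i)
    have h2 : S = (∑ i' : Fin n, (v i'.castSucc) ^ 2) + w ^ 2 := Fin.sum_univ_castSucc _
    linarith
  have hS0 : 0 ≤ S := Finset.sum_nonneg fun _ _ => sq_nonneg _
  -- compute the components of the derivative applied to v
  have hlast : ((((eqE.symm : (Fin (n+1) → ℝ) →L[ℝ] EuclideanSpace ℝ (Fin (n+1))).comp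
      (ContinuousLinearMap.pi (fun j => Fin.lastCases
        ((a * t ^ (a-1)) •
          (ContinuousLinearMap.proj (R := ℝ) (φ := fun _ : Fin (n+1) => ℝ) (Fin.last n)))
        (fun i => x i.castSucc • (((a * γi i - 1) * t ^ (a * γi i - 1 - 1)) •
            (ContinuousLinearMap.proj (R := ℝ) (φ := fun _ : Fin (n+1) => ℝ) (Fin.last n))) +
          (t ^ (a * γi i - 1)) •
            (ContinuousLinearMap.proj (R := ℝ) (φ := fun _ : Fin (n+1) => ℝ) i.castSucc)) j))).comp
        (eqE : EuclideanSpace ℝ (Fin (n+1)) →L[ℝ] (Fin (n+1) → ℝ))) v) (Fin.last n)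
      = a * T * w := by
    simp [ContinuousLinearMap.pi_apply, Fin.lastCases_last, mul_assoc, heqE, hTdef, hwdef,
      PiLp.coe_symm_continuousLinearEquiv, PiLp.coe_continuousLinearEquiv]
  have hcast : ∀ i : Fin n, ((((eqE.symm : (Fin (n+1) → ℝ) →L[ℝ]
      EuclideanSpace ℝ (Fin (n+1))).comp
      (ContinuousLinearMap.pi (fun j => Fin.lastCases
        ((a * t ^ (a-1)) •
          (ContinuousLinearMap.proj (R := ℝ) (φ := fun _ : Fin (n+1) => ℝ) (Fin.last n)))
        (fun i => x i.castSucc • (((a * γi i - 1) * t ^ (a * γi i - 1 - 1)) •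
            (ContinuousLinearMap.proj (R := ℝ) (φ := fun _ : Fin (n+1) => ℝ) (Fin.last n))) +
          (t ^ (a * γi i - 1)) •
            (ContinuousLinearMap.proj (R := ℝ) (φ := fun _ : Fin (n+1) => ℝ) i.castSucc)) j))).comp
        (eqE : EuclideanSpace ℝ (Fin (n+1)) →L[ℝ] (Fin (n+1) → ℝ))) v) i.castSucc
      = x i.castSucc * ((a * γi i - 1) * t ^ (a * γi i - 1 - 1)) * w
        + t ^ (a * γi i - 1) * v i.castSucc := by
    intro i
    simp [ContinuousLinearMap.pi_apply, Fin.lastCases_castSucc, mul_assoc, heqE, hTdef, hwdef,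
      PiLp.coe_symm_continuousLinearEquiv, PiLp.coe_continuousLinearEquiv]
  rw [Fin.sum_univ_castSucc]
  simp only [← hTdef] at hlast hcast
  simp only [hlast, hcast]
  -- per-term bound
  have hterm : ∀ i : Fin n,
      (x i.castSucc * ((a * γi i - 1) * t ^ (a * γi i - 1 - 1)) * w
        + t ^ (a * γi i - 1) * v i.castSucc) ^ 2
      ≤ ((a * γi i - 1) ^ 2 + 1) * T ^ 2 * ((v i.castSucc) ^ 2 + w ^ 2) := by
    intro i
    set u : ℝ := v i.castSucc
    set ei : ℝ := a * γi i - 1 with heidef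
    have hei : a - 1 ≤ ei := by nlinarith [hγi i, ha.le]
    have hB : t ^ ei ≤ T := Real.rpow_le_rpow_of_exponent_ge ht0 ht1.le hei
    have hBpos : 0 < t ^ ei := Real.rpow_pos_of_pos ht0 _
    have hstep : t * t ^ (ei - 1) = t ^ ei := by
      have h := Real.rpow_add ht0 1 (ei - 1)
      rw [Real.rpow_one] at h
      rw [← h]
      congr 1
      ring
    have hApos : 0 < t ^ (ei - 1) := Real.rpow_pos_of_pos ht0 _
    have hxc0 : 0 < x i.castSucc := (hco i).1
    have hxct : x i.castSucc < t := (hco i).2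
    have hA : |x i.castSucc * (ei * t ^ (ei - 1))| ≤ |ei| * T := by
      rw [abs_mul, abs_mul, abs_of_pos hxc0, abs_of_pos hApos]
      calc x i.castSucc * (|ei| * t ^ (ei - 1)) ≤ t * (|ei| * t ^ (ei - 1)) := by
            apply mul_le_mul_of_nonneg_right hxct.le (by positivity)
        _ = |ei| * (t * t ^ (ei - 1)) := by ring
        _ = |ei| * t ^ ei := by rw [hstep]
        _ ≤ |ei| * T := by apply mul_le_mul_of_nonneg_left hB (abs_nonneg _)
    have hA2 : (x i.castSucc * (ei * t ^ (ei - 1))) ^ 2 ≤ ei ^ 2 * T ^ 2 := by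
      calc (x i.castSucc * (ei * t ^ (ei - 1))) ^ 2
          = |x i.castSucc * (ei * t ^ (ei - 1))| ^ 2 := (sq_abs _).symm
        _ ≤ (|ei| * T) ^ 2 := by
            apply pow_le_pow_left₀ (abs_nonneg _) hA
        _ = ei ^ 2 * T ^ 2 := by rw [mul_pow, sq_abs]
    have hB2 : (t ^ ei) ^ 2 ≤ T ^ 2 := pow_le_pow_left₀ hBpos.le hB 2
    set A : ℝ := x i.castSucc * (ei * t ^ (ei - 1))
    set B : ℝ := t ^ ei
    have key : (A * w + B * u) ^ 2 ≤ (A ^ 2 + B ^ 2) * (w ^ 2 + u ^ 2) := by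
      nlinarith [sq_nonneg (A * u - B * w)]
    calc (x i.castSucc * (ei * t ^ (ei - 1)) * w + t ^ ei * u) ^ 2
        = (A * w + B * u) ^ 2 := by ring
      _ ≤ (A ^ 2 + B ^ 2) * (w ^ 2 + u ^ 2) := key
      _ ≤ (ei ^ 2 * T ^ 2 + T ^ 2) * (w ^ 2 + u ^ 2) := by
          apply mul_le_mul_of_nonneg_right (by linarith) (by positivity)
      _ = (ei ^ 2 + 1) * T ^ 2 * (u ^ 2 + w ^ 2) := by ring
  calc (∑ i : Fin n, (x i.castSucc * ((a * γi i - 1) * t ^ (a * γi i - 1 - 1)) * w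
        + t ^ (a * γi i - 1) * v i.castSucc) ^ 2) + (a * T * w) ^ 2
      ≤ (∑ i : Fin n, ((a * γi i - 1) ^ 2 + 1) * T ^ 2 * S) + a ^ 2 * T ^ 2 * S := by
        apply add_le_add
        · apply Finset.sum_le_sum
          intro i _
          calc (x i.castSucc * ((a * γi i - 1) * t ^ (a * γi i - 1 - 1)) * w
              + t ^ (a * γi i - 1) * v i.castSucc) ^ 2
              ≤ ((a * γi i - 1) ^ 2 + 1) * T ^ 2 * ((v i.castSucc) ^ 2 + w ^ 2) := hterm i
            _ ≤ ((a * γi i - 1) ^ 2 + 1) * T ^ 2 * S := by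
                apply mul_le_mul_of_nonneg_left (hS i) (by positivity)
        · have hw2 : w ^ 2 ≤ S := by
            have := Finset.single_le_sum (f := fun j : Fin (n+1) => (v j) ^ 2)
              (fun _ _ => sq_nonneg _) (Finset.mem_univ (Fin.last n))
            simpa using this
          calc (a * T * w) ^ 2 = a ^ 2 * T ^ 2 * w ^ 2 := by ring
            _ ≤ a ^ 2 * T ^ 2 * S := by
                apply mul_le_mul_of_nonneg_left hw2 (by positivity)
    _ = ((∑ i, (a * γi i - 1) ^ 2) + n + a ^ 2) * T ^ 2 * S := by
        rw [← Finset.sum_mul, ← Finset.sum_mul, Finset.sum_add_distrib]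
        simp [Finset.card_univ]
        ring

/-- For every `a > 0`, the integral `∫_{Ω_n} ‖Dφ_a(x)‖^{n+1} dx` is finite
(the exponent is the dimension), and it is bounded by
`( Σ_i (aγ_i - 1)^2 + n + a^2 )^{(n+1)/2} / ((n+1)·a)`.
(Paper dimension `n` is Lean `n + 1`.) -/
theorem statement3 (n : ℕ) (hn : 1 ≤ n) (γi : Fin n → ℝ) (hγi : ∀ i, 1 ≤ γi i)
    (a : ℝ) (ha : 0 < a) :
    IntegrableOn (fun x => ‖fderiv ℝ (phiMap n γi a) x‖ ^ (n + 1)) (OmegaModel n) volume ∧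
    ∫ x in OmegaModel n, ‖fderiv ℝ (phiMap n γi a) x‖ ^ (n + 1) ≤
      ((∑ i, (a * γi i - 1) ^ 2) + n + a ^ 2) ^ ((n + 1 : ℝ) / 2) / ((n + 1) * a) := by
  classical
  set K : ℝ := (∑ i, (a * γi i - 1) ^ 2) + n + a ^ 2 with hKdef
  have hK : (0:ℝ) ≤ K := by rw [hKdef]; positivity
  set C : ℝ := K ^ ((n + 1 : ℝ) / 2) with hCdef
  have hC : 0 ≤ C := Real.rpow_nonneg hK _
  set c : ℝ := (a - 1) * ((n : ℝ) + 1) with hcdef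
  have hcsum : c + (n : ℝ) + 1 = ((n : ℝ) + 1) * a := by rw [hcdef]; ring
  have hc : (0:ℝ) < c + (n : ℝ) + 1 := by rw [hcsum]; positivity
  have hlint := omega_lintegral n c hc
  -- pointwise bound
  have hpt : ∀ x ∈ OmegaModel n,
      ‖fderiv ℝ (phiMap n γi a) x‖ ^ (n + 1) ≤ C * (x (Fin.last n)) ^ c := by
    intro x hx
    have ht0 : 0 < x (Fin.last n) := hx.1
    have h1 := norm_fderiv_phiMap_le n γi a hγi ha hx
    calc ‖fderiv ℝ (phiMap n γi a) x‖ ^ (n + 1)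
        ≤ (Real.sqrt K * (x (Fin.last n)) ^ (a - 1)) ^ (n + 1) :=
          pow_le_pow_left₀ (norm_nonneg _) h1 _
      _ = C * (x (Fin.last n)) ^ c := by
          rw [mul_pow]
          congr 1
          · rw [Real.sqrt_eq_rpow, ← Real.rpow_natCast (K ^ ((1:ℝ)/2)) (n+1),
              ← Real.rpow_mul hK]
            congr 1
            push_cast
            ring
          · rw [← Real.rpow_natCast ((x (Fin.last n)) ^ (a-1)) (n+1),
              ← Real.rpow_mul ht0.le]
            congr 1
            push_cast
            ring
  have hgm : Measurable fun x : EuclideanSpace ℝ (Fin (n+1)) =>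
      ENNReal.ofReal (C * (x (Fin.last n)) ^ c) :=
    ((((measurable_pi_apply (Fin.last n)).comp (WithLp.measurable_ofLp 2 (Fin (n+1) → ℝ))).pow_const c).const_mul C).ennreal_ofReal
  have hbound : ∫⁻ x in OmegaModel n,
      ENNReal.ofReal (‖fderiv ℝ (phiMap n γi a) x‖ ^ (n + 1)) ≤
      ENNReal.ofReal C * ENNReal.ofReal (1 / (c + n + 1)) := by
    calc ∫⁻ x in OmegaModel n, ENNReal.ofReal (‖fderiv ℝ (phiMap n γi a) x‖ ^ (n + 1))
        ≤ ∫⁻ x in OmegaModel n, ENNReal.ofReal (C * (x (Fin.last n)) ^ c) :=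
          setLIntegral_mono hgm fun x hx => ENNReal.ofReal_le_ofReal (hpt x hx)
      _ = ∫⁻ x in OmegaModel n, ENNReal.ofReal C * ENNReal.ofReal ((x (Fin.last n)) ^ c) := by
          simp_rw [ENNReal.ofReal_mul hC]
      _ = ENNReal.ofReal C * ∫⁻ x in OmegaModel n, ENNReal.ofReal ((x (Fin.last n)) ^ c) :=
          lintegral_const_mul _ (((measurable_pi_apply (Fin.last n)).comp (WithLp.measurable_ofLp 2 (Fin (n+1) → ℝ))).pow_const c).ennreal_ofReal
      _ = ENNReal.ofReal C * ENNReal.ofReal (1 / (c + n + 1)) := by rw [hlint]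
  have hfm : AEStronglyMeasurable (fun x => ‖fderiv ℝ (phiMap n γi a) x‖ ^ (n + 1))
      (volume.restrict (OmegaModel n)) :=
    (((measurable_fderiv ℝ (phiMap n γi a)).norm.pow_const (n+1))).aestronglyMeasurable
  have hfin : ENNReal.ofReal C * ENNReal.ofReal (1 / (c + n + 1)) < ⊤ :=
    ENNReal.mul_lt_top ENNReal.ofReal_lt_top ENNReal.ofReal_lt_top
  constructor
  · refine ⟨hfm, ?_⟩
    rw [hasFiniteIntegral_iff_norm]
    refine lt_of_le_of_lt ?_ hfin
    calc ∫⁻ x in OmegaModel n, ENNReal.ofReal ‖‖fderiv ℝ (phiMap n γi a) x‖ ^ (n + 1)‖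
        = ∫⁻ x in OmegaModel n, ENNReal.ofReal (‖fderiv ℝ (phiMap n γi a) x‖ ^ (n + 1)) :=
          lintegral_congr fun x => by rw [Real.norm_eq_abs, abs_of_nonneg (by positivity)]
      _ ≤ _ := hbound
  · rw [integral_eq_lintegral_of_nonneg_ae
      (Filter.Eventually.of_forall fun x => by positivity) hfm]
    calc (∫⁻ x in OmegaModel n,
          ENNReal.ofReal (‖fderiv ℝ (phiMap n γi a) x‖ ^ (n + 1))).toReal
        ≤ (ENNReal.ofReal C * ENNReal.ofReal (1 / (c + n + 1))).toReal :=
          ENNReal.toReal_mono hfin.ne hbound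
      _ = C * (1 / (c + n + 1)) := by
          rw [← ENNReal.ofReal_mul hC, ENNReal.toReal_ofReal
            (by positivity)]
      _ = C / ((n + 1) * a) := by
          rw [hcsum]
          field_simp
end
end

section
/- Let a > 0, let 1 ≤ q < r < ∞ satisfy nq < aγr, and set M_{r,q} = a^{1/q}·((r−q)/(aγr − nq))^{(r−q)/(rq)}. Then for every Borel measurable function g : Ω_γ → ℝ, inf_{c ∈ ℝ} ( ∫_{Ω_γ} |g(y) − c|^q dy )^{1/q} ≤ M_{r,q} · inf_{c ∈ ℝ} ( ∫_{Ω_n} |g(φ_a(x)) − c|^r dx )^{1/r}, the inequality being understood in [0, ∞]. -/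
open MeasureTheory Real Finset
open scoped ENNReal BigOperators

noncomputable section

namespace Statement11Aux

variable {n : ℕ} {γi : Fin n → ℝ} {a : ℝ}

lemma measurable_coord (n : ℕ) (j : Fin (n + 1)) :
    Measurable (fun x : EuclideanSpace ℝ (Fin (n + 1)) => x j) :=
  (measurable_pi_apply j).comp (MeasurableEquiv.toLp 2 (Fin (n + 1) → ℝ)).symm.measurable

lemma measurableSet_omegaModel (n : ℕ) : MeasurableSet (OmegaModel n) := by
  have h : OmegaModel n =
      ({x : EuclideanSpace ℝ (Fin (n + 1)) | 0 < x (Fin.last n)} ∩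
        {x | x (Fin.last n) < 1}) ∩
      ⋂ i : Fin n, ({x | 0 < x i.castSucc} ∩ {x | x i.castSucc < x (Fin.last n)}) := by
    ext x
    simp only [OmegaModel, Set.mem_setOf_eq, Set.mem_inter_iff, Set.mem_iInter, forall_and]
    tauto
  rw [h]
  refine (MeasurableSet.inter ?_ ?_).inter (MeasurableSet.iInter fun i =>
    MeasurableSet.inter ?_ ?_)
  · exact measurableSet_lt measurable_const (measurable_coord n _)
  · exact measurableSet_lt (measurable_coord n _) measurable_const
  · exact measurableSet_lt measurable_const (measurable_coord n _)
  · exact measurableSet_lt (measurable_coord n _) (measurable_coord n _)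

lemma rpow_sum {ι : Type*} (s : Finset ι) {t : ℝ} (ht : 0 < t) (f : ι → ℝ) :
    t ^ (∑ i ∈ s, f i) = ∏ i ∈ s, t ^ f i := by
  classical
  induction s using Finset.induction with
  | empty => simp
  | insert _ _ hnot ih =>
    rw [Finset.sum_insert hnot, Finset.prod_insert hnot, Real.rpow_add ht, ih]

/-- `phiMap` in the plain pi-type world. -/
def phiP (n : ℕ) (γi : Fin n → ℝ) (a : ℝ) (x : Fin (n + 1) → ℝ) : Fin (n + 1) → ℝ :=
  fun j => Fin.lastCases (x (Fin.last n) ^ a)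
    (fun i => x i.castSucc * x (Fin.last n) ^ (a * γi i - 1)) j

/-- Candidate derivative of `phiP`. -/
def phiDerivP (n : ℕ) (γi : Fin n → ℝ) (a : ℝ) (x : Fin (n + 1) → ℝ) :
    (Fin (n + 1) → ℝ) →L[ℝ] (Fin (n + 1) → ℝ) :=
  ContinuousLinearMap.pi (fun j => Fin.lastCases
    ((a * x (Fin.last n) ^ (a - 1)) • ContinuousLinearMap.proj (Fin.last n))
    (fun i => x i.castSucc •
        ((a * γi i - 1) * x (Fin.last n) ^ (a * γi i - 1 - 1)) •
          ContinuousLinearMap.proj (Fin.last n)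
      + x (Fin.last n) ^ (a * γi i - 1) • ContinuousLinearMap.proj i.castSucc) j)

lemma hasFDerivAt_phiP (x : Fin (n + 1) → ℝ) (ht : 0 < x (Fin.last n)) :
    HasFDerivAt (phiP n γi a) (phiDerivP n γi a x) x := by
  apply hasFDerivAt_pi''
  intro j
  have hproj : ∀ k : Fin (n + 1),
      HasFDerivAt (fun y : Fin (n + 1) → ℝ => y k)
        (ContinuousLinearMap.proj k : (Fin (n + 1) → ℝ) →L[ℝ] ℝ) x := by
    intro k
    exact (ContinuousLinearMap.proj (R := ℝ) (φ := fun _ : Fin (n + 1) => ℝ) k).hasFDerivAt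
  have hcomp : ∀ j : Fin (n + 1),
      (ContinuousLinearMap.proj j).comp (phiDerivP n γi a x) = Fin.lastCases
        ((a * x (Fin.last n) ^ (a - 1)) • ContinuousLinearMap.proj (Fin.last n))
        (fun i => x i.castSucc •
            ((a * γi i - 1) * x (Fin.last n) ^ (a * γi i - 1 - 1)) •
              ContinuousLinearMap.proj (Fin.last n)
          + x (Fin.last n) ^ (a * γi i - 1) • ContinuousLinearMap.proj i.castSucc) j :=
    fun j => ContinuousLinearMap.proj_pi _ j
  rw [hcomp]
  induction j using Fin.lastCases with
  | last =>
    simp only [Fin.lastCases_last]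
    have h2 := (Real.hasDerivAt_rpow_const (x := x (Fin.last n)) (p := a)
      (Or.inl ht.ne')).comp_hasFDerivAt x (hproj (Fin.last n))
    have hfun : (fun y : Fin (n + 1) → ℝ => phiP n γi a y (Fin.last n)) =
        fun y => y (Fin.last n) ^ a := by
      funext y; simp [phiP]
    rw [hfun]
    exact h2
  | cast i =>
    simp only [Fin.lastCases_castSucc]
    have h2 := (Real.hasDerivAt_rpow_const (x := x (Fin.last n)) (p := a * γi i - 1)
      (Or.inl ht.ne')).comp_hasFDerivAt x (hproj (Fin.last n))
    have h3 := (hproj i.castSucc).mul h2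
    have hfun : (fun y : Fin (n + 1) → ℝ => phiP n γi a y i.castSucc) =
        fun y => y i.castSucc * y (Fin.last n) ^ (a * γi i - 1) := by
      funext y; simp [phiP]
    rw [hfun]
    exact h3

lemma det_phiDerivP (x : Fin (n + 1) → ℝ) (ht : 0 < x (Fin.last n)) :
    (phiDerivP n γi a x).det
      = a * x (Fin.last n) ^ (a * (1 + ∑ i, γi i) - (n + 1)) := by
  set t := x (Fin.last n) with htdef
  have hdet : (phiDerivP n γi a x).det =
      (LinearMap.toMatrix' (phiDerivP n γi a x).toLinearMap).det := by
    rw [LinearMap.det_toMatrix']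
  rw [hdet]
  set M := LinearMap.toMatrix' (phiDerivP n γi a x).toLinearMap with hM
  have hentry : ∀ j k : Fin (n + 1), M j k =
      phiDerivP n γi a x (fun j' => if j' = k then 1 else 0) j := by
    intro j k
    rw [hM, LinearMap.toMatrix'_apply]
    rw [show (Pi.single k (1:ℝ) : Fin (n + 1) → ℝ) = fun j' => if j' = k then 1 else 0 from by
      funext j'; simp [Pi.single_apply]]
    rfl
  have htri : M.BlockTriangular id := by
    intro j k hk
    simp only [id_eq] at hk
    rw [hentry]
    have hklast : k ≠ Fin.last n := (hk.trans_le (Fin.le_last j)).ne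
    induction j using Fin.lastCases with
    | last =>
      simp [phiDerivP, ContinuousLinearMap.pi_apply, Ne.symm hklast]
    | cast i =>
      have hki : i.castSucc ≠ k := (hk.ne).symm
      simp [phiDerivP, ContinuousLinearMap.pi_apply, Ne.symm hklast, hki]
  rw [Matrix.det_of_upperTriangular htri]
  have hdiag_cast : ∀ i : Fin n, M i.castSucc i.castSucc = t ^ (a * γi i - 1) := by
    intro i
    rw [hentry]
    have hne : Fin.last n ≠ i.castSucc := (Fin.castSucc_lt_last i).ne'
    simp [phiDerivP, ContinuousLinearMap.pi_apply, hne]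
    rfl
  have hdiag_last : M (Fin.last n) (Fin.last n) = a * t ^ (a - 1) := by
    rw [hentry]
    simp [phiDerivP, ContinuousLinearMap.pi_apply]
    exact Or.inl rfl
  rw [Fin.prod_univ_castSucc]
  simp only [hdiag_cast, hdiag_last]
  rw [← rpow_sum Finset.univ ht]
  rw [show a * t ^ (a - 1) = t ^ (a - 1) * a from mul_comm _ _, ← mul_assoc,
    ← Real.rpow_add ht]
  have hsum : ∑ i, (a * γi i - 1) = a * ∑ i, γi i - n := by
    rw [Finset.sum_sub_distrib, ← Finset.mul_sum]
    simp [Finset.card_univ]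
  rw [hsum]
  rw [mul_comm]
  congr 1
  ring

lemma phiMap_apply_last (x : EuclideanSpace ℝ (Fin (n + 1))) :
    phiMap n γi a x (Fin.last n) = x (Fin.last n) ^ a := by
  simp [phiMap]

lemma phiMap_apply_castSucc (x : EuclideanSpace ℝ (Fin (n + 1))) (i : Fin n) :
    phiMap n γi a x i.castSucc = x i.castSucc * x (Fin.last n) ^ (a * γi i - 1) := by
  simp [phiMap]

lemma phi_injOn (ha : 0 < a) : Set.InjOn (phiMap n γi a) (OmegaModel n) := by
  intro x hx x' hx' hEq
  have ht0 : 0 < x (Fin.last n) := hx.1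
  have ht0' : 0 < x' (Fin.last n) := hx'.1
  have hlast : x (Fin.last n) ^ a = x' (Fin.last n) ^ a := by
    have := congrArg (fun z : EuclideanSpace ℝ (Fin (n + 1)) => z (Fin.last n)) hEq
    simpa [phiMap_apply_last] using this
  have htlast : x (Fin.last n) = x' (Fin.last n) := by
    have h1 : (x (Fin.last n) ^ a) ^ (1 / a) = (x' (Fin.last n) ^ a) ^ (1 / a) := by
      rw [hlast]
    rwa [← Real.rpow_mul ht0.le, ← Real.rpow_mul ht0'.le, mul_one_div_cancel ha.ne',
      Real.rpow_one, Real.rpow_one] at h1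
  ext j
  induction j using Fin.lastCases with
  | last => exact htlast
  | cast i =>
    have hi := congrArg (fun z : EuclideanSpace ℝ (Fin (n + 1)) => z i.castSucc) hEq
    simp only [phiMap_apply_castSucc] at hi
    rw [htlast] at hi
    exact mul_right_cancel₀ (Real.rpow_pos_of_pos ht0' _).ne' hi

lemma phi_image (ha : 0 < a) : phiMap n γi a '' OmegaModel n = OmegaGamma n γi := by
  ext y
  constructor
  · rintro ⟨x, ⟨ht0, ht1, hi⟩, rfl⟩
    refine ⟨?_, ?_, ?_⟩
    · rw [phiMap_apply_last]; exact Real.rpow_pos_of_pos ht0 a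
    · rw [phiMap_apply_last]; exact Real.rpow_lt_one ht0.le ht1 ha
    · intro i
      rw [phiMap_apply_castSucc, phiMap_apply_last]
      constructor
      · exact mul_pos (hi i).1 (Real.rpow_pos_of_pos ht0 _)
      · have key : (x (Fin.last n) ^ a) ^ γi i
            = x (Fin.last n) * x (Fin.last n) ^ (a * γi i - 1) := by
          rw [← Real.rpow_mul ht0.le]
          nth_rewrite 2 [← Real.rpow_one (x (Fin.last n))]
          rw [← Real.rpow_add ht0]
          ring_nf
        rw [key]
        exact mul_lt_mul_of_pos_right (hi i).2 (Real.rpow_pos_of_pos ht0 _)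
  · rintro ⟨hu0, hu1, hyi⟩
    set u := y (Fin.last n) with hu
    set t : ℝ := u ^ (1 / a) with htdef
    have ht0 : 0 < t := Real.rpow_pos_of_pos hu0 _
    have hta : t ^ a = u := by
      rw [htdef, ← Real.rpow_mul hu0.le, one_div_mul_cancel ha.ne', Real.rpow_one]
    refine ⟨(WithLp.toLp 2 (fun j => Fin.lastCases t
      (fun i => y i.castSucc * t ^ (1 - a * γi i)) j : Fin (n + 1) → ℝ) : EuclideanSpace ℝ (Fin (n + 1))),
      ⟨?_, ?_, ?_⟩, ?_⟩
    · simpa using ht0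
    · simpa using Real.rpow_lt_one hu0.le hu1 (by positivity)
    · intro i
      simp only [Fin.lastCases_castSucc, Fin.lastCases_last]
      constructor
      · exact mul_pos (hyi i).1 (Real.rpow_pos_of_pos ht0 _)
      · have hys : y i.castSucc < t ^ (a * γi i) := by
          rw [Real.rpow_mul ht0.le, hta]; exact (hyi i).2
        have : y i.castSucc * t ^ (1 - a * γi i) < t ^ (a * γi i) * t ^ (1 - a * γi i) :=
          mul_lt_mul_of_pos_right hys (Real.rpow_pos_of_pos ht0 _)
        rwa [← Real.rpow_add ht0, show a * γi i + (1 - a * γi i) = 1 by ring,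
          Real.rpow_one] at this
    · ext j
      induction j using Fin.lastCases with
      | last => simpa [phiMap_apply_last] using hta
      | cast i =>
        rw [phiMap_apply_castSucc]
        simp only [Fin.lastCases_castSucc, Fin.lastCases_last]
        rw [mul_assoc, ← Real.rpow_add ht0,
          show 1 - a * γi i + (a * γi i - 1) = 0 by ring, Real.rpow_zero, mul_one]

/-- Derivative of `phiMap` in the Euclidean world. -/
def phiDerivE (n : ℕ) (γi : Fin n → ℝ) (a : ℝ) (x : EuclideanSpace ℝ (Fin (n + 1))) :
    EuclideanSpace ℝ (Fin (n + 1)) →L[ℝ] EuclideanSpace ℝ (Fin (n + 1)) :=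
  ((EuclideanSpace.equiv (Fin (n + 1)) ℝ).symm.toContinuousLinearMap.comp
      (phiDerivP n γi a (EuclideanSpace.equiv (Fin (n + 1)) ℝ x))).comp
    (EuclideanSpace.equiv (Fin (n + 1)) ℝ).toContinuousLinearMap

lemma hasFDerivAt_phiMap (x : EuclideanSpace ℝ (Fin (n + 1))) (ht : 0 < x (Fin.last n)) :
    HasFDerivAt (phiMap n γi a) (phiDerivE n γi a x) x := by
  have h := hasFDerivAt_phiP (γi := γi) (a := a)
    (EuclideanSpace.equiv (Fin (n + 1)) ℝ x) ht
  have h1 := ((EuclideanSpace.equiv (Fin (n + 1)) ℝ).symm.toContinuousLinearMap.hasFDerivAt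
    (x := phiP n γi a (EuclideanSpace.equiv (Fin (n + 1)) ℝ x))).comp x
    (h.comp x (EuclideanSpace.equiv (Fin (n + 1)) ℝ).toContinuousLinearMap.hasFDerivAt)
  have hfun : phiMap n γi a = ⇑(EuclideanSpace.equiv (Fin (n + 1)) ℝ).symm.toContinuousLinearMap ∘ phiP n γi a ∘ ⇑(EuclideanSpace.equiv (Fin (n + 1)) ℝ).toContinuousLinearMap := rfl
  rw [hfun]
  exact h1

lemma det_phiDerivE (x : EuclideanSpace ℝ (Fin (n + 1))) (ht : 0 < x (Fin.last n)) :
    (phiDerivE n γi a x).det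
      = a * x (Fin.last n) ^ (a * (1 + ∑ i, γi i) - (n + 1)) := by
  refine Eq.trans ?_ (det_phiDerivP (γi := γi) (a := a)
    (EuclideanSpace.equiv (Fin (n + 1)) ℝ x) ht)
  show LinearMap.det ((phiDerivE n γi a x).toLinearMap)
    = LinearMap.det ((phiDerivP n γi a (EuclideanSpace.equiv (Fin (n + 1)) ℝ x)).toLinearMap)
  have : ((((EuclideanSpace.equiv (Fin (n + 1)) ℝ).symm.toContinuousLinearMap.comp
      (phiDerivP n γi a (EuclideanSpace.equiv (Fin (n + 1)) ℝ x))).comp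
      (EuclideanSpace.equiv (Fin (n + 1)) ℝ).toContinuousLinearMap).toLinearMap)
      = (((EuclideanSpace.equiv (Fin (n + 1)) ℝ).symm.toLinearEquiv :
            (Fin (n + 1) → ℝ) →ₗ[ℝ] EuclideanSpace ℝ (Fin (n + 1))) ∘ₗ
          (phiDerivP n γi a (EuclideanSpace.equiv (Fin (n + 1)) ℝ x)).toLinearMap) ∘ₗ
          ((EuclideanSpace.equiv (Fin (n + 1)) ℝ).symm.toLinearEquiv.symm :
            EuclideanSpace ℝ (Fin (n + 1)) →ₗ[ℝ] (Fin (n + 1) → ℝ)) := by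
    rfl
  show LinearMap.det ((((EuclideanSpace.equiv (Fin (n + 1)) ℝ).symm.toContinuousLinearMap.comp
      (phiDerivP n γi a (EuclideanSpace.equiv (Fin (n + 1)) ℝ x))).comp
      (EuclideanSpace.equiv (Fin (n + 1)) ℝ).toContinuousLinearMap).toLinearMap) = _
  rw [this, LinearMap.comp_assoc, LinearMap.det_conj]

lemma cov (ha : 0 < a) (f : EuclideanSpace ℝ (Fin (n + 1)) → ℝ≥0∞) :
    ∫⁻ y in OmegaGamma n γi, f y
      = ∫⁻ x in OmegaModel n,
          ENNReal.ofReal (a * x (Fin.last n) ^ (a * (1 + ∑ i, γi i) - (n + 1)))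
            * f (phiMap n γi a x) := by
  rw [← phi_image (γi := γi) ha,
    lintegral_image_eq_lintegral_abs_det_fderiv_mul volume (measurableSet_omegaModel n)
      (fun x hx => (hasFDerivAt_phiMap x hx.1).hasFDerivWithinAt)
      (phi_injOn ha) f]
  apply setLIntegral_congr_fun (measurableSet_omegaModel n)
  intro x hx
  have h0 : 0 < x (Fin.last n) := hx.1
  beta_reduce
  rw [det_phiDerivE x h0, abs_of_pos (by positivity)]

lemma lintegral_rpow_Ioo01 {c : ℝ} (hc : -1 < c) :
    ∫⁻ t in Set.Ioo (0:ℝ) 1, ENNReal.ofReal (t ^ c) = ENNReal.ofReal (1 / (c + 1)) := by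
  have hint : IntegrableOn (fun t : ℝ => t ^ c) (Set.Ioo 0 1) := by
    have h1 := intervalIntegral.intervalIntegrable_rpow' (a := 0) (b := 1) hc
    rw [intervalIntegrable_iff, Set.uIoc_of_le (by norm_num : (0:ℝ) ≤ 1)] at h1
    exact h1.mono_set Set.Ioo_subset_Ioc_self
  have hnn : 0 ≤ᵐ[volume.restrict (Set.Ioo (0:ℝ) 1)] fun t : ℝ => t ^ c := by
    filter_upwards [ae_restrict_mem measurableSet_Ioo] with t ht
    exact Real.rpow_nonneg ht.1.le _
  rw [← ofReal_integral_eq_lintegral_ofReal hint hnn]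
  congr 1
  rw [← MeasureTheory.integral_Ioc_eq_integral_Ioo,
    ← intervalIntegral.integral_of_le (by norm_num : (0:ℝ) ≤ 1),
    integral_rpow (Or.inl hc), Real.one_rpow,
    Real.zero_rpow (by linarith : c + 1 ≠ 0)]
  ring

set_option maxHeartbeats 1000000 in
lemma weight_integral (n : ℕ) {s : ℝ} (hs : -1 < s + n) :
    ∫⁻ x in OmegaModel n, ENNReal.ofReal (x (Fin.last n) ^ s)
      = ENNReal.ofReal (1 / (s + n + 1)) := by
  have e1 := (EuclideanSpace.volume_preserving_symm_measurableEquiv_toLp (Fin (n + 1))).symm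
  rw [← e1.setLIntegral_comp_preimage_emb
      (MeasurableEquiv.toLp 2 (Fin (n + 1) → ℝ)).measurableEmbedding
      (fun y => ENNReal.ofReal (y (Fin.last n) ^ s)) (OmegaModel n)]
  have e2 := (volume_preserving_piFinSuccAbove (fun _ : Fin (n + 1) => ℝ) (Fin.last n)).symm
  rw [← e2.setLIntegral_comp_preimage_emb
      (MeasurableEquiv.piFinSuccAbove (fun _ : Fin (n + 1) => ℝ) (Fin.last n)).symm.measurableEmbedding]
  set q := MeasurableEquiv.piFinSuccAbove (fun _ : Fin (n + 1) => ℝ) (Fin.last n) with hq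
  set T : Set (ℝ × (Fin n → ℝ)) :=
    {p | (0 < p.1 ∧ p.1 < 1) ∧ ∀ i : Fin n, 0 < p.2 i ∧ p.2 i < p.1} with hT
  have hql : ∀ p : ℝ × (Fin n → ℝ), q.symm p (Fin.last n) = p.1 := by
    intro p; simp [hq, MeasurableEquiv.piFinSuccAbove]
  have hqc : ∀ (p : ℝ × (Fin n → ℝ)) (i : Fin n), q.symm p i.castSucc = p.2 i := by
    intro p i
    show (Fin.insertNthEquiv (fun _ : Fin (n+1) => ℝ) (Fin.last n)) p i.castSucc = p.2 i
    rw [Fin.insertNthEquiv_apply, ← Fin.succAbove_last]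
    exact Fin.insertNth_apply_succAbove _ _ _ _
  have hTeq : q.symm ⁻¹' ((MeasurableEquiv.toLp 2 (Fin (n + 1) → ℝ)) ⁻¹'
      OmegaModel n) = T := by
    ext p
    simp only [Set.mem_preimage, OmegaModel, Set.mem_setOf_eq, hT]
    constructor
    · rintro ⟨h1, h2, h3⟩
      rw [show (MeasurableEquiv.toLp 2 (Fin (n+1) → ℝ)) (q.symm p) (Fin.last n)
          = q.symm p (Fin.last n) from rfl, hql] at h1 h2
      refine ⟨⟨h1, h2⟩, fun i => ?_⟩
      have := h3 i
      rw [show (MeasurableEquiv.toLp 2 (Fin (n+1) → ℝ)) (q.symm p) i.castSucc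
          = q.symm p i.castSucc from rfl,
        show (MeasurableEquiv.toLp 2 (Fin (n+1) → ℝ)) (q.symm p) (Fin.last n)
          = q.symm p (Fin.last n) from rfl, hql, hqc] at this
      exact this
    · rintro ⟨⟨h1, h2⟩, h3⟩
      refine ⟨?_, ?_, fun i => ?_⟩
      · rw [show (MeasurableEquiv.toLp 2 (Fin (n+1) → ℝ)) (q.symm p) (Fin.last n)
          = q.symm p (Fin.last n) from rfl, hql]; exact h1
      · rw [show (MeasurableEquiv.toLp 2 (Fin (n+1) → ℝ)) (q.symm p) (Fin.last n)
          = q.symm p (Fin.last n) from rfl, hql]; exact h2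
      · rw [show (MeasurableEquiv.toLp 2 (Fin (n+1) → ℝ)) (q.symm p) i.castSucc
          = q.symm p i.castSucc from rfl,
          show (MeasurableEquiv.toLp 2 (Fin (n+1) → ℝ)) (q.symm p) (Fin.last n)
          = q.symm p (Fin.last n) from rfl, hql, hqc]
        exact h3 i
  have hfval : ∀ p : ℝ × (Fin n → ℝ),
      ENNReal.ofReal (((MeasurableEquiv.toLp 2 (Fin (n + 1) → ℝ)) (q.symm p))
        (Fin.last n) ^ s) = ENNReal.ofReal (p.1 ^ s) := by
    intro p
    rw [show (MeasurableEquiv.toLp 2 (Fin (n+1) → ℝ)) (q.symm p) (Fin.last n)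
        = q.symm p (Fin.last n) from rfl, hql]
  have hTmeas : MeasurableSet T := by
    have : T = ({p : ℝ × (Fin n → ℝ) | 0 < p.1} ∩ {p | p.1 < 1}) ∩
        ⋂ i : Fin n, ({p : ℝ × (Fin n → ℝ) | 0 < p.2 i} ∩ {p | p.2 i < p.1}) := by
      ext p
      simp only [hT, Set.mem_setOf_eq, Set.mem_inter_iff, Set.mem_iInter, forall_and]
      try tauto
    rw [this]
    refine (MeasurableSet.inter ?_ ?_).inter (MeasurableSet.iInter fun i =>
      MeasurableSet.inter ?_ ?_)
    · exact measurableSet_lt measurable_const measurable_fst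
    · exact measurableSet_lt measurable_fst measurable_const
    · exact measurableSet_lt measurable_const (by measurability)
    · exact measurableSet_lt (by measurability) measurable_fst
  calc ∫⁻ p in q.symm ⁻¹' ((MeasurableEquiv.toLp 2 (Fin (n + 1) → ℝ)) ⁻¹'
          OmegaModel n),
        ENNReal.ofReal (((MeasurableEquiv.toLp 2 (Fin (n + 1) → ℝ)) (q.symm p))
          (Fin.last n) ^ s) ∂volume
      = ∫⁻ p in T, ENNReal.ofReal (p.1 ^ s) ∂volume := by
        rw [hTeq]
        exact setLIntegral_congr_fun hTmeas (fun p _ => hfval p)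
    _ = ∫⁻ p, T.indicator (fun p : ℝ × (Fin n → ℝ) => ENNReal.ofReal (p.1 ^ s)) p ∂volume := by
        rw [lintegral_indicator hTmeas]
    _ = ∫⁻ t : ℝ, ∫⁻ y : Fin n → ℝ,
          T.indicator (fun p : ℝ × (Fin n → ℝ) => ENNReal.ofReal (p.1 ^ s)) (t, y) ∂volume
            ∂volume := by
        rw [Measure.volume_eq_prod, lintegral_prod]
        exact (Measurable.indicator (by measurability) hTmeas).aemeasurable
    _ = ∫⁻ t : ℝ, (Set.Ioo (0:ℝ) 1).indicator
          (fun t => ENNReal.ofReal (t ^ (s + n))) t ∂volume := by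
        apply lintegral_congr
        intro t
        by_cases ht : t ∈ Set.Ioo (0:ℝ) 1
        · rw [Set.indicator_of_mem ht]
          have hfun : (fun y : Fin n → ℝ =>
              T.indicator (fun p : ℝ × (Fin n → ℝ) => ENNReal.ofReal (p.1 ^ s)) (t, y))
              = fun y => (Set.univ.pi fun _ : Fin n => Set.Ioo (0:ℝ) t).indicator
                  (fun _ => ENNReal.ofReal (t ^ s)) y := by
            funext y
            by_cases hy : ∀ i : Fin n, 0 < y i ∧ y i < t
            · rw [Set.indicator_of_mem, Set.indicator_of_mem]
              · simpa [Set.mem_pi] using hy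
              · exact ⟨⟨ht.1, ht.2⟩, hy⟩
            · rw [Set.indicator_of_notMem, Set.indicator_of_notMem]
              · simpa [Set.mem_pi] using hy
              · exact fun hmem => hy hmem.2
          rw [hfun, lintegral_indicator (MeasurableSet.univ_pi fun _ => measurableSet_Ioo) _,
            setLIntegral_const, volume_pi_pi]
          simp only [Real.volume_Ioo, sub_zero, Finset.prod_const, Finset.card_univ,
            Fintype.card_fin]
          rw [← ENNReal.ofReal_pow ht.1.le, ← ENNReal.ofReal_mul (Real.rpow_nonneg ht.1.le _),
            ← Real.rpow_natCast t n, ← Real.rpow_add ht.1]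
        · rw [Set.indicator_of_notMem ht]
          have : ∀ y : Fin n → ℝ,
              T.indicator (fun p : ℝ × (Fin n → ℝ) => ENNReal.ofReal (p.1 ^ s)) (t, y) = 0 := by
            intro y
            apply Set.indicator_of_notMem
            exact fun hmem => ht ⟨hmem.1.1, hmem.1.2⟩
          simp [this]
    _ = ∫⁻ t in Set.Ioo (0:ℝ) 1, ENNReal.ofReal (t ^ (s + n)) ∂volume := by
        rw [lintegral_indicator measurableSet_Ioo]
    _ = ENNReal.ofReal (1 / (s + n + 1)) := by
        rw [lintegral_rpow_Ioo01 (by linarith)]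

end Statement11Aux

set_option maxHeartbeats 1000000 in
/-- For `a > 0`, `1 ≤ q < r < ∞` with `(n+1)q < aγr`, setting
`M_{r,q} = a^{1/q}·((r-q)/(aγr-(n+1)q))^{(r-q)/(rq)}`, every Borel measurable `g` satisfies
(in `[0,∞]`)
`inf_c (∫_{Ω_γ} |g - c|^q dy)^{1/q} ≤ M_{r,q} · inf_c (∫_{Ω_n} |g∘φ_a - c|^r dx)^{1/r}`.
(Paper dimension `n` is Lean `n + 1`.) -/
theorem statement11 (n : ℕ) (hn : 1 ≤ n) (γi : Fin n → ℝ) (hγi : ∀ i, 1 ≤ γi i)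
    (γ : ℝ) (hγ : γ = 1 + ∑ i, γi i)
    (a q r : ℝ) (ha : 0 < a) (hq : 1 ≤ q) (hqr : q < r)
    (h : (n + 1 : ℝ) * q < a * γ * r)
    (g : EuclideanSpace ℝ (Fin (n + 1)) → ℝ) (hg : Measurable g) :
    (⨅ c : ℝ, (∫⁻ y in OmegaGamma n γi, ENNReal.ofReal (|g y - c| ^ q)) ^ (1 / q)) ≤
      ENNReal.ofReal (a ^ (1 / q) *
          ((r - q) / (a * γ * r - (n + 1) * q)) ^ ((r - q) / (r * q))) *
        ⨅ c : ℝ, (∫⁻ x in OmegaModel n,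
            ENNReal.ofReal (|g (phiMap n γi a x) - c| ^ r)) ^ (1 / r) := by
  classical
  subst hγ
  have hq0 : 0 < q := lt_of_lt_of_le one_pos hq
  have hr0 : 0 < r := hq0.trans hqr
  have hrq : 0 < r - q := sub_pos.2 hqr
  have hden : 0 < a * (1 + ∑ i, γi i) * r - (n + 1) * q := sub_pos.2 h
  set K : ℝ := (r - q) / (a * (1 + ∑ i, γi i) * r - (n + 1) * q) with hK
  have hK0 : 0 < K := div_pos hrq hden
  set M : ℝ := a ^ (1 / q) * K ^ ((r - q) / (r * q)) with hM
  have hM0 : 0 < M := mul_pos (Real.rpow_pos_of_pos ha _) (Real.rpow_pos_of_pos hK0 _)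
  set e₀ : ℝ := a * (1 + ∑ i, γi i) - (n + 1) with he₀
  have hφ : Measurable (phiMap n γi a) := by
    have h1 : Measurable (fun x : EuclideanSpace ℝ (Fin (n + 1)) =>
        (fun j => phiMap n γi a x j : Fin (n + 1) → ℝ)) := by
      apply measurable_pi_lambda
      intro j
      induction j using Fin.lastCases with
      | last =>
        simp only [phiMap, Fin.lastCases_last]
        exact (by measurability : Measurable fun y : ℝ => y ^ a).comp
          (Statement11Aux.measurable_coord n _)
      | cast i =>
        simp only [phiMap, Fin.lastCases_castSucc]
        exact (Statement11Aux.measurable_coord n _).mul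
          ((by measurability : Measurable fun y : ℝ => y ^ (a * γi i - 1)).comp
            (Statement11Aux.measurable_coord n _))
    exact (MeasurableEquiv.toLp 2 (Fin (n + 1) → ℝ)).measurable.comp h1
  have key : ∀ c : ℝ,
      (∫⁻ y in OmegaGamma n γi, ENNReal.ofReal (|g y - c| ^ q)) ^ (1 / q) ≤
        ENNReal.ofReal M *
          (∫⁻ x in OmegaModel n,
            ENNReal.ofReal (|g (phiMap n γi a x) - c| ^ r)) ^ (1 / r) := by
    intro c
    rw [Statement11Aux.cov (γi := γi) ha (fun y => ENNReal.ofReal (|g y - c| ^ q))]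
    set F : EuclideanSpace ℝ (Fin (n + 1)) → ℝ≥0∞ :=
      fun x => ENNReal.ofReal (|g (phiMap n γi a x) - c| ^ q) with hF
    set W : EuclideanSpace ℝ (Fin (n + 1)) → ℝ≥0∞ :=
      fun x => ENNReal.ofReal (a * x (Fin.last n) ^ e₀) with hW
    have hFmeas : Measurable F := by
      apply Measurable.ennreal_ofReal
      exact (by measurability : Measurable fun y : ℝ => |y| ^ q).comp
        ((hg.comp hφ).sub measurable_const)
    have hWmeas : Measurable W := by
      apply Measurable.ennreal_ofReal
      exact measurable_const.mul
        ((by measurability : Measurable fun y : ℝ => y ^ e₀).comp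
          (Statement11Aux.measurable_coord n _))
    have hconj : Real.HolderConjugate (r / q) (r / (r - q)) := by
      rw [Real.holderConjugate_iff]
      constructor
      · rw [lt_div_iff₀ hq0]; linarith
      · rw [inv_div, inv_div, ← add_div, show q + (r - q) = r by ring, div_self hr0.ne']
    have holder := ENNReal.lintegral_mul_le_Lp_mul_Lq (volume.restrict (OmegaModel n)) hconj
      hFmeas.aemeasurable hWmeas.aemeasurable
    have hcomm : ∫⁻ x in OmegaModel n, W x * F x = ∫⁻ x in OmegaModel n, (F * W) x :=
      lintegral_congr fun x => mul_comm _ _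
    -- the F-factor
    have hX : ∫⁻ x in OmegaModel n, F x ^ (r / q)
        = ∫⁻ x in OmegaModel n, ENNReal.ofReal (|g (phiMap n γi a x) - c| ^ r) := by
      apply lintegral_congr
      intro x
      rw [hF, ENNReal.ofReal_rpow_of_nonneg (by positivity) (by positivity),
        ← Real.rpow_mul (abs_nonneg _), mul_div_cancel₀ r hq0.ne']
    -- the W-factor
    have hexp : e₀ * (r / (r - q)) + n + 1
        = (a * (1 + ∑ i, γi i) * r - (n + 1) * q) / (r - q) := by
      field_simp
      ring
    have hexp' : (-1 : ℝ) < e₀ * (r / (r - q)) + n := by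
      have h1 : 0 < (a * (1 + ∑ i, γi i) * r - (n + 1) * q) / (r - q) := div_pos hden hrq
      nlinarith [hexp]
    have hZ : ∫⁻ x in OmegaModel n, W x ^ (r / (r - q))
        = ENNReal.ofReal (a ^ (r / (r - q)) * K) := by
      have h1 : ∀ᵐ x ∂volume, x ∈ OmegaModel n →
          W x ^ (r / (r - q)) = ENNReal.ofReal (a ^ (r / (r - q)))
            * ENNReal.ofReal (x (Fin.last n) ^ (e₀ * (r / (r - q)))) := by
        filter_upwards with x hx
        have ht : 0 < x (Fin.last n) := hx.1
        rw [hW, ENNReal.ofReal_rpow_of_pos (by positivity),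
          Real.mul_rpow ha.le (Real.rpow_nonneg ht.le _),
          ← Real.rpow_mul ht.le, ENNReal.ofReal_mul (by positivity)]
      rw [setLIntegral_congr_fun_ae (Statement11Aux.measurableSet_omegaModel n) h1,
        lintegral_const_mul' _ _ ENNReal.ofReal_ne_top,
        Statement11Aux.weight_integral n hexp',
        ← ENNReal.ofReal_mul (by positivity)]
      congr 1
      rw [hexp, one_div_div]
    calc (∫⁻ x in OmegaModel n, W x * F x) ^ (1 / q)
        ≤ ((∫⁻ x in OmegaModel n, F x ^ (r / q)) ^ (1 / (r / q))
            * (∫⁻ x in OmegaModel n, W x ^ (r / (r - q))) ^ (1 / (r / (r - q)))) ^ (1 / q) := by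
          apply ENNReal.rpow_le_rpow _ (by positivity)
          rw [hcomm]
          exact holder
      _ = ((∫⁻ x in OmegaModel n, ENNReal.ofReal (|g (phiMap n γi a x) - c| ^ r)) ^ (q / r)
            * ENNReal.ofReal (a ^ (r / (r - q)) * K) ^ ((r - q) / r)) ^ (1 / q) := by
          rw [hX, hZ, one_div_div, one_div_div]
      _ = (∫⁻ x in OmegaModel n, ENNReal.ofReal (|g (phiMap n γi a x) - c| ^ r)) ^ (1 / r)
            * ENNReal.ofReal (a ^ (r / (r - q)) * K) ^ ((r - q) / (r * q)) := by
          have he1 : q / r * (1 / q) = 1 / r := by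
            field_simp
          have he2 : (r - q) / r * (1 / q) = (r - q) / (r * q) := by
            rw [div_mul_div_comm, mul_one]
          rw [ENNReal.mul_rpow_of_nonneg _ _ (by positivity), ← ENNReal.rpow_mul,
            ← ENNReal.rpow_mul, he1, he2]
      _ = ENNReal.ofReal M *
            (∫⁻ x in OmegaModel n,
              ENNReal.ofReal (|g (phiMap n γi a x) - c| ^ r)) ^ (1 / r) := by
          have he3 : r / (r - q) * ((r - q) / (r * q)) = 1 / q := by
            rw [div_mul_div_comm, div_eq_div_iff (by positivity) (by positivity)]
            ring
          have hMM : ENNReal.ofReal (a ^ (r / (r - q)) * K) ^ ((r - q) / (r * q))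
              = ENNReal.ofReal M := by
            rw [ENNReal.ofReal_rpow_of_pos (by positivity), hM,
              Real.mul_rpow (by positivity) hK0.le, ← Real.rpow_mul ha.le, he3]
          rw [hMM, mul_comm]
  refine le_trans (le_iInf fun c => iInf_le_of_le c (key c)) ?_
  rw [ENNReal.mul_iInf_of_ne (by simp [hM0]) ENNReal.ofReal_ne_top]
end
end

section
/- Let n ≥ 2 be an integer, let γ ≥ n, suppose 1 < p < α + γ and max{−n, p(n−γ)/n} < α < n(p−1), set p* = γp/(α+γ−p), let a satisfy max{0, (n−p)/(α+γ−p)} < a < min{ n/γ, p(n−1)/(α+γ−p) }, and let q satisfy p ≤ q < p*. Then there exist real numbers s and r such that 1 < s < np/( a(α+γ−p) + p ), s < r < ns/(n − s), and nq < aγr. -/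
/-- Let `n ≥ 2` be an integer, `γ ≥ n`, `1 < p < α + γ`,
`max{-n, p(n-γ)/n} < α < n(p-1)`, `p* = γp/(α+γ-p)`,
`max{0, (n-p)/(α+γ-p)} < a < min{n/γ, p(n-1)/(α+γ-p)}`, and `p ≤ q < p*`.
Then there exist reals `s, r` with `1 < s < np/(a(α+γ-p)+p)`, `s < r < ns/(n-s)` and
`nq < aγr`. -/
theorem statement15 (n : ℕ) (hn : 2 ≤ n) (γ α p a q : ℝ) (hγ : (n : ℝ) ≤ γ)
    (hp₁ : 1 < p) (hp₂ : p < α + γ)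
    (hα₁ : max (-(n : ℝ)) (p * (n - γ) / n) < α) (hα₂ : α < n * (p - 1))
    (ha₁ : max 0 ((n - p) / (α + γ - p)) < a)
    (ha₂ : a < min ((n : ℝ) / γ) (p * (n - 1) / (α + γ - p)))
    (hq₁ : p ≤ q) (hq₂ : q < γ * p / (α + γ - p)) :
    ∃ s r : ℝ, 1 < s ∧ s < n * p / (a * (α + γ - p) + p) ∧
      s < r ∧ r < n * s / (n - s) ∧ n * q < a * γ * r := by
  have hn' : (2:ℝ) ≤ n := by exact_mod_cast hn
  have hnpos : (0:ℝ) < n := by linarith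
  have hγpos : 0 < γ := by linarith
  have hA : 0 < α + γ - p := by linarith
  have hapos : 0 < a := lt_of_le_of_lt (le_max_left _ _) ha₁
  have hppos : (0:ℝ) < p := by linarith
  have hqpos : (0:ℝ) < q := by linarith
  have han : a * (α + γ - p) < p * (n - 1) := by
    have h := lt_of_lt_of_le ha₂ (min_le_right _ _)
    rw [lt_div_iff₀ hA] at h; linarith
  have hqA : q * (α + γ - p) < γ * p := by
    rw [lt_div_iff₀ hA] at hq₂; linarith
  set D := a * (α + γ - p) + p with hDdef
  clear_value D
  have hDpos : 0 < D := by have := mul_pos hapos hA; simp only [hDdef]; linarith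
  have hDgtp : p < D := by have := mul_pos hapos hA; simp only [hDdef]; linarith
  have hDlt : D < n * p := by simp only [hDdef]; nlinarith
  set s₀ : ℝ := n * p / D with hs₀def
  clear_value s₀
  have hs₀gt1 : 1 < s₀ := by rw [hs₀def]; exact (one_lt_div hDpos).2 hDlt
  have hs₀ltn : s₀ < n := by
    rw [hs₀def, div_lt_iff₀ hDpos]; nlinarith
  set L : ℝ := n * q / (a * γ) with hLdef
  clear_value L
  have haγpos : 0 < a * γ := mul_pos hapos hγpos
  have hLpos : 0 < L := by rw [hLdef]; exact div_pos (mul_pos hnpos hqpos) haγpos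
  have hL' : L * (a * γ) = n * q := by rw [hLdef]; exact div_mul_cancel₀ _ (ne_of_gt haγpos)
  -- key: L * (a*(α+γ-p)) < n*p
  have hkey : L * (a * (α + γ - p)) < n * p := by
    have h1 : L * (a * γ) * (α + γ - p) < n * (γ * p) := by
      rw [hL']; nlinarith
    have h2 : L * (a * (α + γ - p)) * γ < n * p * γ := by nlinarith
    exact lt_of_mul_lt_mul_right h2 (le_of_lt hγpos)
  set gL : ℝ := n * L / (n + L) with hgLdef
  clear_value gL
  have hnLpos : 0 < n + L := by linarith
  have hgLs₀ : gL < s₀ := by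
    rw [hgLdef, hs₀def, div_lt_div_iff₀ hnLpos hDpos]
    have e1 : n * L * D = n * (L * (a * (α + γ - p))) + n * (L * p) := by
      rw [hDdef]; ring
    have e2 : n * p * (n + L) = n * (n * p) + n * (L * p) := by ring
    have h3 : n * (L * (a * (α + γ - p))) < n * (n * p) :=
      mul_lt_mul_of_pos_left hkey hnpos
    linarith
  set s : ℝ := (max 1 gL + s₀) / 2 with hsdef
  clear_value s
  have hs1 : 1 < s := by
    have := le_max_left 1 gL
    rw [hsdef]; linarith
  have hss₀ : s < s₀ := by
    have := max_lt hs₀gt1 hgLs₀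
    rw [hsdef]; linarith
  have hsn : s < n := lt_trans hss₀ hs₀ltn
  have hspos : 0 < s := by linarith
  have hnspos : 0 < n - s := by linarith
  have hgLs : gL < s := by
    have h1 : gL ≤ max 1 gL := le_max_right _ _
    rw [hsdef]; linarith
  set fs : ℝ := n * s / (n - s) with hfsdef
  clear_value fs
  have hsfs : s < fs := by
    rw [hfsdef, lt_div_iff₀ hnspos]
    have e1 : s * (n - s) = n * s - s * s := by ring
    have e2 : 0 < s * s := mul_pos hspos hspos
    linarith
  have hLfs : L < fs := by
    rw [hfsdef, lt_div_iff₀ hnspos]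
    have h1 : n * L < s * (n + L) := by
      rw [hgLdef, div_lt_iff₀ hnLpos] at hgLs; linarith
    have e1 : L * (n - s) = n * L - s * L := by ring
    have e2 : s * (n + L) = s * n + s * L := by ring
    have e3 : (n : ℝ) * s = s * n := by ring
    linarith
  set r : ℝ := (max s L + fs) / 2 with hrdef
  clear_value r
  have hsr : s < r := by
    have := le_max_left s L
    rw [hrdef]; linarith
  have hrfs : r < fs := by
    have := max_lt hsfs hLfs
    rw [hrdef]; linarith
  have hLr : L < r := by
    have := le_max_right s L
    rw [hrdef]; linarith
  refine ⟨s, r, hs1, ?_, hsr, ?_, ?_⟩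
  · exact hss₀
  · rw [← hfsdef]; exact hrfs
  · rw [hLdef, div_lt_iff₀ haγpos] at hLr
    have e : r * (a * γ) = a * γ * r := by ring
    linarith
end
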